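/- Ground semantics is preserved by R∖@ even under instantiation of matchable variables: if p rewrites in one step to p' with respect to R∖@, and σ is a substitution whose domain is disjoint from the free variables of p, then ⟦σ(p)⟧ = ⟦σ(p')⟧. -/
import Mathlib


/-- A constructor signature: a type of constructor symbols with arities. -/
structure Sig where
  C : Type
  ar : C → ℕ

/-- Values: ground constructor terms over the signature `S`. -/
inductive Val (S : Sig) : Type where
  | mk : (c : S.C) → (Fin (S.ar c) → Val S) → Val S

/-- Extended as-patterns: variables, constructor applications, sums,
complements, `⊥` and aliases `q @ p`. -/
inductive Pat (S : Sig) : Type where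
  | var : ℕ → Pat S
  | cons : (c : S.C) → (Fin (S.ar c) → Pat S) → Pat S
  | plus : Pat S → Pat S → Pat S
  | minus : Pat S → Pat S → Pat S
  | bot : Pat S
  | atp : Pat S → Pat S → Pat S

namespace Pat

variable {S : Sig}

/-- Variables occurring in a pattern. -/
def vars : Pat S → Set ℕ
  | var x => {x}
  | cons _ ps => ⋃ i, vars (ps i)
  | plus p q => vars p ∪ vars q
  | minus p q => vars p ∪ vars q
  | bot => ∅
  | atp q p => vars q ∪ vars p

/-- Linearity of extended as-patterns. -/
inductive Linear : Pat S → Prop where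
  | var (x : ℕ) : Linear (var x)
  | cons (c : S.C) (ps : Fin (S.ar c) → Pat S) :
      (∀ i, Linear (ps i)) →
      (∀ i j, i ≠ j → Disjoint (vars (ps i)) (vars (ps j))) →
      Linear (cons c ps)
  | plus {p q : Pat S} : Linear p → Linear q → Linear (plus p q)
  | minus {p q : Pat S} : Linear p → Linear q → Disjoint (vars p) (vars q) →
      Linear (minus p q)
  | bot : Linear bot
  | atp {q p : Pat S} : Linear q → Linear p → Disjoint (vars q) (vars p) →
      Linear (atp q p)

/-- Ground semantics of extended as-patterns. -/
def sem : Pat S → Set (Val S)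
  | var _ => Set.univ
  | cons c ps => {v | ∃ vs : Fin (S.ar c) → Val S, v = Val.mk c vs ∧ ∀ i, vs i ∈ sem (ps i)}
  | plus p q => sem p ∪ sem q
  | minus p q => sem p \ sem q
  | bot => ∅
  | atp q p => sem q ∩ sem p

/-- The extended instance relation: `Matches p v` means pattern `p` matches `v`. -/
def Matches : Pat S → Val S → Prop
  | var _, _ => True
  | cons c ps, v => ∃ vs : Fin (S.ar c) → Val S, v = Val.mk c vs ∧ ∀ i, Matches (ps i) (vs i)
  | plus p q, v => Matches p v ∨ Matches q v
  | minus p q, v => Matches p v ∧ ¬ Matches q v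
  | bot, _ => False
  | atp q p, v => Matches q v ∧ Matches p v

/-- Additive patterns: patterns containing no complement `∖`. -/
inductive Additive : Pat S → Prop where
  | var (x : ℕ) : Additive (var x)
  | cons (c : S.C) (ps : Fin (S.ar c) → Pat S) :
      (∀ i, Additive (ps i)) → Additive (cons c ps)
  | plus {p q : Pat S} : Additive p → Additive q → Additive (plus p q)
  | bot : Additive bot
  | atp {q p : Pat S} : Additive q → Additive p → Additive (atp q p)

/-- Patterns containing no `⊥`. A pattern is *pure additive* if it is
`Additive` and `BotFree`. -/
inductive BotFree : Pat S → Prop where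
  | var (x : ℕ) : BotFree (var x)
  | cons (c : S.C) (ps : Fin (S.ar c) → Pat S) :
      (∀ i, BotFree (ps i)) → BotFree (cons c ps)
  | plus {p q : Pat S} : BotFree p → BotFree q → BotFree (plus p q)
  | minus {p q : Pat S} : BotFree p → BotFree q → BotFree (minus p q)
  | atp {q p : Pat S} : BotFree q → BotFree p → BotFree (atp q p)

/-- The sum `p₁ + ⋯ + pₙ` of a list of patterns (`⊥` for the empty list). -/
def sumList : List (Pat S) → Pat S
  | [] => bot
  | [p] => p
  | p :: q :: r => plus p (sumList (q :: r))

variable [Fintype S.C]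

/-- The sum `Σ_{c ∈ C} c(z₁,…,z_m) ∖ g(t₁,…,tₙ)`, where the fresh variables
are given by `z i = fv i`. -/
noncomputable def sumVM (fv : ℕ → ℕ) (g : S.C) (ts : Fin (S.ar g) → Pat S) : Pat S :=
  sumList ((Finset.univ : Finset S.C).toList.map fun c =>
    minus (cons c fun i => var (fv i)) (cons g ts))

/-- One step of the rewriting system `R∖@` of Figure 3 (closed under contexts).
`fv` enumerates the fresh variables used by rule (M6'). -/
inductive Step (fv : ℕ → ℕ) : Pat S → Pat S → Prop where
  | addL {v : Pat S} : Additive v → Step fv (plus bot v) v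
  | addR {v : Pat S} : Additive v → Step fv (plus v bot) v
  | empty {c : S.C} {ps : Fin (S.ar c) → Pat S} (i : Fin (S.ar c)) :
      (∀ j, Additive (ps j)) → ps i = bot → Step fv (cons c ps) bot
  | emptyA {x : ℕ} : Step fv (atp (var x) bot) bot
  | dist {c : S.C} {ps : Fin (S.ar c) → Pat S} (i : Fin (S.ar c)) {u w : Pat S} :
      (∀ j, Additive (ps j)) → ps i = plus u w →
      Step fv (cons c ps)
        (plus (cons c (Function.update ps i u)) (cons c (Function.update ps i w)))
  | distAt {x : ℕ} {v1 v2 : Pat S} : Additive v1 → Additive v2 →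
      Step fv (atp (var x) (plus v1 v2)) (plus (atp (var x) v1) (atp (var x) v2))
  | minusMV {v : Pat S} {x : ℕ} : Additive v → Step fv (minus v (var x)) bot
  | minusMB {v : Pat S} : Additive v → Step fv (minus v bot) v
  | minusMP {w v1 v2 : Pat S} : Additive w → Additive v1 → Additive v2 →
      Step fv (minus w (plus v1 v2)) (minus (minus w v1) v2)
  | minusVM {x : ℕ} {g : S.C} {ts : Fin (S.ar g) → Pat S} :
      (∀ j, Additive (ts j)) → (∀ j, BotFree (ts j)) →
      Step fv (minus (var x) (cons g ts)) (atp (var x) (sumVM fv g ts))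
  | minusBM {g : S.C} {vs : Fin (S.ar g) → Pat S} :
      (∀ j, Additive (vs j)) → Step fv (minus bot (cons g vs)) bot
  | minusPM {v w : Pat S} {g : S.C} {vs : Fin (S.ar g) → Pat S} :
      Additive v → Additive w → (∀ j, Additive (vs j)) →
      Step fv (minus (plus v w) (cons g vs))
        (plus (minus v (cons g vs)) (minus w (cons g vs)))
  | minusFF {f : S.C} {vs ts : Fin (S.ar f) → Pat S} :
      (∀ j, Additive (vs j)) → (∀ j, Additive (ts j)) → (∀ j, BotFree (ts j)) →
      Step fv (minus (cons f vs) (cons f ts))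
        (sumList (List.ofFn fun i => cons f (Function.update vs i (minus (vs i) (ts i)))))
  | minusFG {f g : S.C} {vs : Fin (S.ar f) → Pat S} {ws : Fin (S.ar g) → Pat S} :
      f ≠ g → (∀ j, Additive (vs j)) → (∀ j, Additive (ws j)) →
      Step fv (minus (cons f vs) (cons g ws)) (cons f vs)
  | minusAM {x : ℕ} {v w : Pat S} : Additive v → Additive w →
      Step fv (minus (atp (var x) v) w) (atp (var x) (minus v w))
  | minusMA {x : ℕ} {v w : Pat S} : Additive v → Additive w →
      Step fv (minus v (atp (var x) w)) (minus v w)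
  | congCons {c : S.C} {ps : Fin (S.ar c) → Pat S} (i : Fin (S.ar c)) {p' : Pat S} :
      Step fv (ps i) p' → Step fv (cons c ps) (cons c (Function.update ps i p'))
  | congPlusL {p p' q : Pat S} : Step fv p p' → Step fv (plus p q) (plus p' q)
  | congPlusR {p q q' : Pat S} : Step fv q q' → Step fv (plus p q) (plus p q')
  | congMinusL {p p' q : Pat S} : Step fv p p' → Step fv (minus p q) (minus p' q)
  | congMinusR {p q q' : Pat S} : Step fv q q' → Step fv (minus p q) (minus p q')
  | congAliasL {q q' p : Pat S} : Step fv q q' → Step fv (atp q p) (atp q' p)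
  | congAliasR {q p p' : Pat S} : Step fv p p' → Step fv (atp q p) (atp q p')

/-- Patterns containing no sum `+`. -/
inductive PlusFree : Pat S → Prop where
  | var (x : ℕ) : PlusFree (var x)
  | cons (c : S.C) (ps : Fin (S.ar c) → Pat S) :
      (∀ i, PlusFree (ps i)) → PlusFree (cons c ps)
  | minus {p q : Pat S} : PlusFree p → PlusFree q → PlusFree (minus p q)
  | bot : PlusFree bot
  | atp {q p : Pat S} : PlusFree q → PlusFree p → PlusFree (atp q p)

/-- Terms in which every `+` symbol has only `+` symbols above it:
sums are pushed to the top. -/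
inductive TopPlus : Pat S → Prop where
  | leaf {p : Pat S} : PlusFree p → TopPlus p
  | plus {p q : Pat S} : TopPlus p → TopPlus q → TopPlus (plus p q)

/-- `q` is a normal form of `p` w.r.t. the relation `R`. -/
def NormalFormOf (R : Pat S → Pat S → Prop) (p q : Pat S) : Prop :=
  Relation.ReflTransGen R p q ∧ ¬ ∃ r, R q r

end Pat

namespace Pat

variable {S : Sig}

/-- The matchable variables of an extended as-pattern. -/
def mvar : Pat S → Set ℕ
  | var x => {x}
  | cons _ ps => ⋃ i, mvar (ps i)
  | plus p q => mvar p ∩ mvar q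
  | minus p _ => mvar p
  | bot => Set.univ
  | atp q p => mvar q ∪ mvar p

/-- The free variables of an extended as-pattern. -/
def fvar (p : Pat S) : Set ℕ := vars p \ mvar p

end Pat

namespace Pat

variable {S : Sig}

/-- Applying a substitution (a map from variables to terms) to a pattern. -/
def subst (σ : ℕ → Pat S) : Pat S → Pat S
  | var x => σ x
  | cons c ps => cons c fun i => subst σ (ps i)
  | plus p q => plus (subst σ p) (subst σ q)
  | minus p q => minus (subst σ p) (subst σ q)
  | bot => bot
  | atp q p => atp (subst σ q) (subst σ p)

/-- Plain constructor patterns (terms over the signature and variables). -/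
inductive PlainPat : Pat S → Prop where
  | var (x : ℕ) : PlainPat (var x)
  | cons (c : S.C) (ps : Fin (S.ar c) → Pat S) :
      (∀ i, PlainPat (ps i)) → PlainPat (cons c ps)

/-- The domain of a substitution. -/
def sdom (σ : ℕ → Pat S) : Set ℕ := {x | σ x ≠ var x}

end Pat

namespace Pat

variable {S : Sig}

lemma mem_sem_cons {c : S.C} {ps : Fin (S.ar c) → Pat S} {v : Val S} :
    v ∈ sem (cons c ps) ↔ ∃ vs, v = Val.mk c vs ∧ ∀ i, vs i ∈ sem (ps i) := Iff.rfl

lemma Valmk_inj {c : S.C} {vs ws : Fin (S.ar c) → Val S}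
    (h : Val.mk c vs = Val.mk c ws) : vs = ws := by
  injection h with h1 h2

lemma sem_subst_empty (σ : ℕ → Pat S) {x : ℕ} :
    ∀ {p : Pat S}, x ∈ p.mvar → x ∉ p.vars → (p.subst σ).sem = ∅ := by
  intro p
  induction p with
  | var y =>
    intro h1 h2
    simp [mvar] at h1
    simp [vars, h1] at h2
  | cons c ps ih =>
    intro h1 h2
    simp [mvar, Set.mem_iUnion] at h1
    simp [vars, Set.mem_iUnion] at h2
    obtain ⟨i, hi⟩ := h1
    have := ih i hi (h2 i)
    rw [Set.eq_empty_iff_forall_notMem]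
    rintro v ⟨vs, rfl, hall⟩
    have h := hall i
    rw [this] at h
    exact h
  | plus p q ihp ihq =>
    intro h1 h2
    simp [mvar] at h1
    simp [vars] at h2
    simp [subst, sem, ihp h1.1 h2.1, ihq h1.2 h2.2]
  | minus p q ihp ihq =>
    intro h1 h2
    simp [mvar] at h1
    simp [vars] at h2
    simp [subst, sem, ihp h1 h2.1]
  | bot => intro _ _; simp [subst, sem]
  | atp q p ihq ihp =>
    intro h1 h2
    simp [mvar] at h1
    simp [vars] at h2
    rcases h1 with h1 | h1
    · simp [subst, sem, ihq h1 h2.1]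
    · simp [subst, sem, ihp h1 h2.2]

lemma sem_cons_empty {c : S.C} {ps : Fin (S.ar c) → Pat S} (j : Fin (S.ar c))
    (h : sem (ps j) = ∅) : sem (cons c ps) = ∅ := by
  rw [Set.eq_empty_iff_forall_notMem]
  rintro v ⟨vs, rfl, hall⟩
  have hj := hall j
  rw [h] at hj
  exact hj

lemma sem_cons_congr {c : S.C} {ps qs : Fin (S.ar c) → Pat S}
    (h : ∀ j, sem (ps j) = sem (qs j)) : sem (cons c ps) = sem (cons c qs) := by
  ext v
  constructor
  · rintro ⟨vs, rfl, hv⟩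
    exact ⟨vs, rfl, fun j => by rw [← h j]; exact hv j⟩
  · rintro ⟨vs, rfl, hv⟩
    exact ⟨vs, rfl, fun j => by rw [h j]; exact hv j⟩

lemma subst_update {n : ℕ} (σ : ℕ → Pat S) (ps : Fin n → Pat S) (i : Fin n) (u : Pat S) :
    (fun j => subst σ (Function.update ps i u j)) =
      Function.update (fun j => subst σ (ps j)) i (subst σ u) := by
  funext j
  by_cases h : j = i
  · subst h; simp
  · simp [Function.update_of_ne h]

lemma subst_sumList (σ : ℕ → Pat S) :
    ∀ l : List (Pat S), subst σ (sumList l) = sumList (l.map (subst σ))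
  | [] => by simp [sumList, subst]
  | [p] => by simp [sumList]
  | p :: q :: r => by
    simp only [sumList, List.map_cons, subst]
    rw [show (sumList (q :: r)).subst σ = sumList ((q :: r).map (subst σ)) from
      subst_sumList σ (q :: r)]
    rfl

lemma mem_sem_sumList {v : Val S} :
    ∀ {l : List (Pat S)}, v ∈ sem (sumList l) ↔ ∃ p ∈ l, v ∈ sem p
  | [] => by simp [sumList, sem]
  | [p] => by simp [sumList]
  | p :: q :: r => by
    have ih := mem_sem_sumList (v := v) (l := q :: r)
    simp only [sumList, sem, Set.mem_union, ih, List.mem_cons]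
    constructor
    · rintro (h | ⟨p', hp', hv⟩)
      · exact ⟨p, Or.inl rfl, h⟩
      · exact ⟨p', Or.inr hp', hv⟩
    · rintro ⟨p', (rfl | hp'), hv⟩
      · exact Or.inl hv
      · exact Or.inr ⟨p', hp', hv⟩

lemma fix_of_fvar {σ : ℕ → Pat S} {p : Pat S} (hdisj : Disjoint (sdom σ) p.fvar)
    {x : ℕ} (hx : x ∈ p.fvar) : σ x = Pat.var x := by
  by_contra h
  exact Set.disjoint_left.mp hdisj h hx

variable [Fintype S.C]

lemma sem_sumVM_subst (fv : ℕ → ℕ) (σ : ℕ → Pat S)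
    (hfresh : ∀ n, σ (fv n) = Pat.var (fv n)) (g : S.C) (ts : Fin (S.ar g) → Pat S) :
    sem (subst σ (sumVM fv g ts)) = (sem (subst σ (cons g ts)))ᶜ := by
  ext v
  rw [sumVM, subst_sumList, Set.mem_compl_iff]
  rw [mem_sem_sumList]
  simp only [List.map_map, List.mem_map, Function.comp]
  constructor
  · rintro ⟨p, ⟨c, hc, rfl⟩, hv⟩
    exact hv.2
  · intro hv
    obtain ⟨c, vs⟩ := v
    refine ⟨subst σ (minus (cons c fun i => var (fv i)) (cons g ts)),
      ⟨c, Finset.mem_toList.mpr (Finset.mem_univ c), rfl⟩, ?_⟩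
    refine ⟨⟨vs, rfl, fun i => ?_⟩, hv⟩
    show vs i ∈ sem (subst σ (var (fv i)))
    rw [show subst σ (var (fv i)) = σ (fv i) from rfl, hfresh]
    trivial

end Pat

namespace Pat

variable {S : Sig} [Fintype S.C]

lemma key (fv : ℕ → ℕ) (σ : ℕ → Pat S) (hfresh : ∀ n, σ (fv n) = Pat.var (fv n)) :
    ∀ {p p' : Pat S}, Pat.Step fv p p' → p.Linear → Disjoint (Pat.sdom σ) p.fvar →
      (p.subst σ).sem = (p'.subst σ).sem := by
  intro p p' hstep
  induction hstep with
  | @addL v hv =>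
    intro _ _
    simp [subst, sem]
  | @addR v hv =>
    intro _ _
    simp [subst, sem]
  | @empty c ps i hadd hbot =>
    intro _ _
    show sem (cons c fun j => subst σ (ps j)) = sem (subst σ bot)
    rw [show sem (subst σ bot) = (∅ : Set (Val S)) from rfl, Set.eq_empty_iff_forall_notMem]
    rintro v ⟨vs, rfl, hall⟩
    have h : vs i ∈ (subst σ (ps i)).sem := hall i
    rw [hbot] at h
    simp [subst, sem] at h
  | @emptyA x =>
    intro _ _
    simp [subst, sem]
  | @dist c ps i u w hadd heq =>
    intro _ _
    show sem (cons c fun j => subst σ (ps j)) = _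
    ext v
    simp only [subst, sem, Set.mem_union, Set.mem_setOf_eq, subst_update]
    constructor
    · rintro ⟨vs, rfl, hall⟩
      have hi := hall i
      rw [heq] at hi
      rcases hi with hi | hi
      · exact Or.inl ⟨vs, rfl, fun j => by
          by_cases hj : j = i
          · subst hj; simpa using hi
          · simpa [Function.update_of_ne hj] using hall j⟩
      · exact Or.inr ⟨vs, rfl, fun j => by
          by_cases hj : j = i
          · subst hj; simpa using hi
          · simpa [Function.update_of_ne hj] using hall j⟩
    · rintro (⟨vs, rfl, hall⟩ | ⟨vs, rfl, hall⟩) <;>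
      · refine ⟨vs, rfl, fun j => ?_⟩
        by_cases hj : j = i
        · subst hj
          have := hall j
          simp only [Function.update_self] at this
          rw [heq]
          first
          | exact Or.inl this
          | exact Or.inr this
        · simpa [Function.update_of_ne hj] using hall j
  | @distAt x v1 v2 h1 h2 =>
    intro _ _
    simp [subst, sem, Set.inter_union_distrib_left]
  | @minusMV v x hv =>
    intro hlin hdisj
    have hd : Disjoint (vars v) (vars (var (S := S) x)) := by
      cases hlin with
      | minus _ _ h => exact h
    by_cases hm : x ∈ mvar v
    · have hx : x ∉ vars v := fun h => Set.disjoint_left.mp hd h rfl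
      simp [subst, sem, sem_subst_empty σ hm hx]
    · have hx : x ∈ fvar (minus v (var x)) := by
        constructor
        · exact Or.inr rfl
        · exact hm
      have := fix_of_fvar hdisj hx
      show sem (subst σ v) \ sem (σ x) = _
      rw [this]
      simp [sem, subst]
  | @minusMB v hv =>
    intro _ _
    simp [subst, sem]
  | @minusMP w v1 v2 h1 h2 h3 =>
    intro _ _
    simp [subst, sem, Set.diff_diff]
  | @minusVM x g ts h1 h2 =>
    intro _ _
    show sem (σ x) \ sem (subst σ (cons g ts)) = sem (σ x) ∩ sem (subst σ (sumVM fv g ts))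
    rw [sem_sumVM_subst fv σ hfresh g ts]
    rfl
  | @minusBM g vs h =>
    intro _ _
    simp [subst, sem]
  | @minusPM v w g vs h1 h2 h3 =>
    intro _ _
    simp [subst, sem, Set.union_diff_distrib]
  | @minusFF f vs ts h1 h2 h3 =>
    intro _ _
    ext v
    rw [subst_sumList, mem_sem_sumList]
    simp only [List.map_ofFn, List.mem_ofFn, Function.comp]
    constructor
    · rintro ⟨⟨us, rfl, hV⟩, hT⟩
      have : ¬ ∀ j, us j ∈ sem (subst σ (ts j)) := fun hall => hT ⟨us, rfl, hall⟩
      push_neg at this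
      obtain ⟨i, hi⟩ := this
      refine ⟨cons f fun j => subst σ (Function.update vs i (minus (vs i) (ts i)) j),
        ⟨i, rfl⟩, us, rfl, fun j => ?_⟩
      by_cases hj : j = i
      · subst hj
        simp only [Function.update_self]
        exact ⟨hV j, hi⟩
      · simpa [Function.update_of_ne hj] using hV j
    · rintro ⟨q, ⟨i, rfl⟩, us, rfl, hall⟩
      constructor
      · refine ⟨us, rfl, fun j => ?_⟩
        by_cases hj : j = i
        · subst hj
          have := hall j
          simp only [Function.update_self] at this
          exact this.1
        · simpa [Function.update_of_ne hj] using hall j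
      · rintro ⟨ws, heq, hws⟩
        have := Valmk_inj heq
        subst this
        have h := hall i
        simp only [Function.update_self] at h
        exact h.2 (hws i)
  | @minusFG f g vs ws hfg h1 h2 =>
    intro _ _
    ext v
    show v ∈ sem (subst σ (cons f vs)) \ sem (subst σ (cons g ws)) ↔ _
    constructor
    · exact fun h => h.1
    · rintro ⟨us, rfl, hus⟩
      refine ⟨⟨us, rfl, hus⟩, ?_⟩
      rintro ⟨xs, heq, -⟩
      injection heq with hc _
      exact hfg hc
  | @minusAM x v w h1 h2 =>
    intro _ _
    show (sem (σ x) ∩ sem (subst σ v)) \ sem (subst σ w)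
        = sem (σ x) ∩ (sem (subst σ v) \ sem (subst σ w))
    ext u
    simp only [Set.mem_diff, Set.mem_inter_iff]
    tauto
  | @minusMA x v w h1 h2 =>
    intro hlin hdisj
    have hd : Disjoint (vars v) (vars (atp (var x) w)) := by
      cases hlin with
      | minus _ _ h => exact h
    by_cases hm : x ∈ mvar v
    · have hx : x ∉ vars v := fun h => Set.disjoint_left.mp hd h (Or.inl rfl)
      show sem (subst σ v) \ _ = sem (subst σ v) \ _
      rw [sem_subst_empty σ hm hx]
      simp
    · have hx : x ∈ fvar (minus v (atp (var x) w)) := ⟨Or.inr (Or.inl rfl), hm⟩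
      have hfix := fix_of_fvar hdisj hx
      show sem (subst σ v) \ (sem (σ x) ∩ sem (subst σ w)) = _
      rw [hfix]
      show _ \ (Set.univ ∩ _) = _
      rw [Set.univ_inter]
      rfl
  | @congCons c ps i p' hst ih =>
    intro hlin hdisj
    have hl : ∀ j, Linear (ps j) := by
      cases hlin with
      | cons _ _ h _ => exact h
    have hdvars : ∀ j k, j ≠ k → Disjoint (vars (ps j)) (vars (ps k)) := by
      cases hlin with
      | cons _ _ _ h => exact h
    by_cases hdis : Disjoint (sdom σ) (fvar (ps i))
    · have hsem := ih (hl i) hdis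
      show sem (cons c fun j => subst σ (ps j))
          = sem (cons c fun j => subst σ (Function.update ps i p' j))
      rw [show (fun j => subst σ (Function.update ps i p' j)) =
          Function.update (fun j => subst σ (ps j)) i (subst σ p') from subst_update σ ps i p']
      apply sem_cons_congr
      intro j
      by_cases hj : j = i
      · subst hj; simpa using hsem
      · simp [Function.update_of_ne hj]
    · rw [Set.not_disjoint_iff] at hdis
      obtain ⟨x, hx1, hx2⟩ := hdis
      have hxv : x ∈ vars (ps i) := hx2.1
      have hxm : x ∉ mvar (ps i) := hx2.2
      have hxnot : x ∉ fvar (cons c ps) := Set.disjoint_left.mp hdisj hx1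
      have hxvars : x ∈ vars (cons c ps) := Set.mem_iUnion.mpr ⟨i, hxv⟩
      have hxmv : x ∈ mvar (cons c ps) := by
        by_contra h
        exact hxnot ⟨hxvars, h⟩
      obtain ⟨j, hj⟩ := Set.mem_iUnion.mp hxmv
      have hji : j ≠ i := fun h => by subst h; exact hxm hj
      have hxnj : x ∉ vars (ps j) := fun h => Set.disjoint_left.mp (hdvars j i hji) h hxv
      have he : (subst σ (ps j)).sem = ∅ := sem_subst_empty σ hj hxnj
      show sem (cons c fun k => subst σ (ps k)) = sem (cons c fun k => subst σ (Function.update ps i p' k))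
      rw [sem_cons_empty j he, sem_cons_empty j (by rwa [Function.update_of_ne hji])]
  | @congPlusL p p' q hst ih =>
    intro hlin hdisj
    have hl : Linear p := by cases hlin with | plus h _ => exact h
    have hsub : fvar p ⊆ fvar (plus p q) := fun x hx =>
      ⟨Or.inl hx.1, fun h => hx.2 h.1⟩
    have := ih hl (hdisj.mono_right hsub)
    show sem (subst σ p) ∪ _ = _
    rw [this]
    rfl
  | @congPlusR p q q' hst ih =>
    intro hlin hdisj
    have hl : Linear q := by cases hlin with | plus _ h => exact h
    have hsub : fvar q ⊆ fvar (plus p q) := fun x hx =>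
      ⟨Or.inr hx.1, fun h => hx.2 h.2⟩
    have := ih hl (hdisj.mono_right hsub)
    show _ ∪ sem (subst σ q) = _
    rw [this]
    rfl
  | @congMinusL p p' q hst ih =>
    intro hlin hdisj
    have hl : Linear p := by cases hlin with | minus h _ _ => exact h
    have hsub : fvar p ⊆ fvar (minus p q) := fun x hx =>
      ⟨Or.inl hx.1, hx.2⟩
    have := ih hl (hdisj.mono_right hsub)
    show sem (subst σ p) \ _ = _
    rw [this]
    rfl
  | @congMinusR p q q' hst ih =>
    intro hlin hdisj
    have hl : Linear q := by cases hlin with | minus _ h _ => exact h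
    have hd : Disjoint (vars p) (vars q) := by cases hlin with | minus _ _ h => exact h
    by_cases hdis : Disjoint (sdom σ) (fvar q)
    · have := ih hl hdis
      show _ \ sem (subst σ q) = _
      rw [this]
      rfl
    · rw [Set.not_disjoint_iff] at hdis
      obtain ⟨x, hx1, hx2⟩ := hdis
      have hxnot : x ∉ fvar (minus p q) := Set.disjoint_left.mp hdisj hx1
      have hxm : x ∈ mvar p := by
        by_contra h
        exact hxnot ⟨Or.inr hx2.1, h⟩
      have hxnp : x ∉ vars p := fun h => Set.disjoint_left.mp hd h hx2.1
      have he := sem_subst_empty σ hxm hxnp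
      show sem (subst σ p) \ _ = sem (subst σ p) \ _
      rw [he]
      simp
  | @congAliasL q q' p hst ih =>
    intro hlin hdisj
    have hl : Linear q := by cases hlin with | atp h _ _ => exact h
    have hd : Disjoint (vars q) (vars p) := by cases hlin with | atp _ _ h => exact h
    by_cases hdis : Disjoint (sdom σ) (fvar q)
    · have := ih hl hdis
      show sem (subst σ q) ∩ _ = _
      rw [this]
      rfl
    · rw [Set.not_disjoint_iff] at hdis
      obtain ⟨x, hx1, hx2⟩ := hdis
      have hxnot : x ∉ fvar (atp q p) := Set.disjoint_left.mp hdisj hx1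
      have hxm : x ∈ mvar p := by
        rcases (show x ∈ mvar q ∪ mvar p by
          by_contra h
          exact hxnot ⟨Or.inl hx2.1, h⟩) with h | h
        · exact absurd h hx2.2
        · exact h
      have hxnp : x ∉ vars p := fun h => Set.disjoint_left.mp hd hx2.1 h
      have he := sem_subst_empty σ hxm hxnp
      show _ ∩ sem (subst σ p) = _ ∩ sem (subst σ p)
      rw [he]
      simp
  | @congAliasR q p p' hst ih =>
    intro hlin hdisj
    have hl : Linear p := by cases hlin with | atp _ h _ => exact h
    have hd : Disjoint (vars q) (vars p) := by cases hlin with | atp _ _ h => exact h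
    by_cases hdis : Disjoint (sdom σ) (fvar p)
    · have := ih hl hdis
      show _ ∩ sem (subst σ p) = _
      rw [this]
      rfl
    · rw [Set.not_disjoint_iff] at hdis
      obtain ⟨x, hx1, hx2⟩ := hdis
      have hxnot : x ∉ fvar (atp q p) := Set.disjoint_left.mp hdisj hx1
      have hxm : x ∈ mvar q := by
        rcases (show x ∈ mvar q ∪ mvar p by
          by_contra h
          exact hxnot ⟨Or.inr hx2.1, h⟩) with h | h
        · exact h
        · exact absurd h hx2.2
      have hxnq : x ∉ vars q := fun h => Set.disjoint_left.mp hd h hx2.1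
      have he := sem_subst_empty σ hxm hxnq
      show sem (subst σ q) ∩ _ = sem (subst σ q) ∩ _
      rw [he]
      simp

end Pat

/-- Semantics preservation under substitution application:
if `p` rewrites in one step to `p'` w.r.t. `R∖@` and `σ` is a substitution whose
(finite) domain is disjoint from the free variables of `p` (and which, by
freshness, leaves the fresh variables of the system untouched), then
`⟦σ(p)⟧ = ⟦σ(p')⟧`. -/
theorem stmt13 (S : Sig) [Fintype S.C] (fv : ℕ → ℕ) (hfv : Function.Injective fv)
    (p p' : Pat S) (hlin : p.Linear) (hstep : Pat.Step fv p p')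
    (σ : ℕ → Pat S)
    (hplain : ∀ x, Pat.PlainPat (σ x))
    (hfin : (Pat.sdom σ).Finite)
    (hdisj : Disjoint (Pat.sdom σ) p.fvar)
    (hfresh : ∀ n, σ (fv n) = Pat.var (fv n)) :
    (Pat.subst σ p).sem = (Pat.subst σ p').sem := by
  exact Pat.key fv σ hfresh hstep hlin hdisj
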